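/- There exist constants C₁ > 0 and C₂ > 0 such that for all (x,y) ∈ ℝ² with y ≠ 0, the fundamental solution satisfies |K(x,y)| ≤ C₁ · |y|^{−1/3} · e^{−C₂(|x| + |y|^{2/3})}. -/

import Mathlib

open MeasureTheory

noncomputable section

/-- H(x,y,t) = ∫_{ℝ²} e^{−2πi(xξ₁+yξ₂)} e^{−t(ξ₁²+ξ₂⁴)} dξ. -/
def Hker (x y t : ℝ) : ℂ :=
  ∫ ξ : ℝ × ℝ,
    Complex.exp (-2 * Real.pi * Complex.I * ((x : ℂ) * (ξ.1 : ℂ) + (y : ℂ) * (ξ.2 : ℂ)))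
      * Complex.exp (-(t : ℂ) * ((ξ.1 : ℂ) ^ 2 + (ξ.2 : ℂ) ^ 4))

/-- Fundamental solution K(x,y) = ∫₀^∞ e^{−t} H(x,y,t) dt of −∂ₓₓ + ∂_yyyy + 1. -/
def Kker (x y : ℝ) : ℂ :=
  ∫ t in Set.Ioi (0 : ℝ), Real.exp (-t) • Hker x y t

end


noncomputable section Aux

open Real Set MeasureTheory Filter intervalIntegral Topology
open Complex hiding exp continuous_exp



/-- the quartic-exponential integrand -/
def qf (y t : ℝ) (z : ℂ) : ℂ := Complex.exp (-2 * π * y * z * I - t * z ^ 4)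

lemma qf_norm (y t x s : ℝ) :
    ‖qf y t (x + s * I)‖ = Real.exp (2 * π * y * s - t * (x ^ 4 - 6 * x ^ 2 * s ^ 2 + s ^ 4)) := by
  rw [qf, Complex.norm_exp]
  congr 1
  have h4 : ((x:ℂ) + s * I) ^ 4 = (x^4 - 6*x^2*s^2 + s^4 : ℝ) + (4*x^3*s - 4*x*s^3 : ℝ) * I := by
    have : (I:ℂ)^3 = -I := by rw [pow_succ, Complex.I_sq]; ring
    push_cast
    ring_nf
    rw [Complex.I_sq, this, show (I:ℂ)^4 = 1 from by rw [pow_succ, this]; simp [Complex.I_sq]]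
    ring
  have hph : (-2 * (π:ℂ) * y * (x + s * I) * I) = ((2*π*y*s : ℝ) : ℂ) + ((-2*π*y*x : ℝ)) * I := by
    push_cast
    ring_nf
    rw [Complex.I_sq]
    ring
  rw [h4, hph]
  simp [Complex.sub_re, Complex.mul_re, Complex.mul_im, Complex.add_re, Complex.add_im,
    ← Complex.ofReal_pow]

lemma qf_continuous (y t η : ℝ) : Continuous (fun x : ℝ => qf y t (x + η * I)) := by
  unfold qf; fun_prop

lemma qf_norm_line_le' (y t η x : ℝ) (ht : 0 ≤ t) :
    ‖qf y t (x + η * I)‖ ≤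
      Real.exp (2 * π * y * η + 17 * t * η ^ 4 + t / 2) * Real.exp (-(t / 2) * x ^ 2) := by
  rw [qf_norm, ← Real.exp_add]
  apply Real.exp_le_exp.2
  nlinarith [mul_nonneg ht (sq_nonneg (x^2 - 6*η^2)), mul_nonneg ht (sq_nonneg (x^2 - 1))]

lemma qf_integrable (y t η : ℝ) (ht : 0 < t) :
    Integrable (fun x : ℝ => qf y t (x + η * I)) := by
  refine (((integrable_exp_neg_mul_sq (by positivity : 0 < t/2)).const_mul
    (Real.exp (2 * π * y * η + 17 * t * η ^ 4 + t / 2))).mono'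
    (qf_continuous y t η).aestronglyMeasurable ?_)
  exact Filter.Eventually.of_forall fun x => qf_norm_line_le' y t η x ht.le

lemma qf_norm_vert_le (y t η x s : ℝ) (ht : 0 ≤ t) (hs : |s| ≤ |η|) :
    ‖qf y t (x + s * I)‖ ≤ Real.exp (2 * π * |y| * |η| + 6 * t * x ^ 2 * η ^ 2 - t * x ^ 4) := by
  rw [qf_norm]
  apply Real.exp_le_exp.2
  have h1 : y * s ≤ |y| * |η| := by
    calc y * s ≤ |y * s| := le_abs_self _
    _ = |y| * |s| := abs_mul y s
    _ ≤ |y| * |η| := by gcongr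
  have h2 : s ^ 2 ≤ η ^ 2 := by
    rw [← sq_abs s, ← sq_abs η]; gcongr
  have h3 : 0 ≤ t * s ^ 4 := by positivity
  have hπ : (0:ℝ) < π := Real.pi_pos
  nlinarith [mul_nonneg ht (mul_nonneg (sq_nonneg x) (sub_nonneg.2 h2))]

lemma qf_vert_int_le (y t η : ℝ) (ht : 0 ≤ t) (u : ℝ) :
    ‖∫ s in (0:ℝ)..η, qf y t (u + s * I)‖ ≤
      Real.exp (2 * π * |y| * |η| + 6 * t * u ^ 2 * η ^ 2 - t * u ^ 4) * |η - 0| := by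
  apply intervalIntegral.norm_integral_le_of_norm_le_const
  intro s hs
  have absy : |s| ≤ |η| := by
    rcases le_or_gt 0 η with (h | h)
    · rw [uIoc_of_le h] at hs
      rw [abs_of_nonneg h, abs_of_pos hs.1]
      exact hs.2
    · rw [uIoc_of_ge h.le] at hs
      rw [abs_of_neg h, abs_of_nonpos hs.2, neg_le_neg_iff]
      exact hs.1.le
  exact qf_norm_vert_le y t η u s ht absy

lemma qf_vert_tendsto (y t η : ℝ) (ht : 0 < t) :
    Tendsto (fun T : ℝ =>
      Real.exp (2 * π * |y| * |η| + 6 * t * T ^ 2 * η ^ 2 - t * T ^ 4) * |η - 0|) atTop (𝓝 0) := by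
  have h0 : Tendsto (fun T : ℝ =>
      Real.exp (2 * π * |y| * |η| + 6 * t * T ^ 2 * η ^ 2 - t * T ^ 4)) atTop (𝓝 0) := by
    apply Real.tendsto_exp_atBot.comp
    have h1 : Tendsto (fun T : ℝ => (t * T ^ 2 - 6 * t * η ^ 2) * T ^ 2) atTop atTop := by
      apply Tendsto.atTop_mul_atTop₀
      · exact tendsto_atTop_add_const_right _ _
          ((tendsto_const_mul_atTop_of_pos ht).mpr (tendsto_pow_atTop two_ne_zero))
      · exact tendsto_pow_atTop two_ne_zero
    have h2 : Tendsto (fun T : ℝ => 2 * π * |y| * |η| + -((t * T ^ 2 - 6 * t * η ^ 2) * T ^ 2))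
        atTop atBot := by
      apply tendsto_atBot_add_const_left
      exact tendsto_neg_atTop_atBot.comp h1
    refine h2.congr fun T => by ring
  simpa using h0.mul_const |η - 0|

theorem qf_contour (y t η : ℝ) (ht : 0 < t) :
    ∫ x : ℝ, qf y t x = ∫ x : ℝ, qf y t (x + η * I) := by
  refine tendsto_nhds_unique ?_
    (intervalIntegral_tendsto_integral (qf_integrable y t η ht)
      tendsto_neg_atTop_atBot tendsto_id)
  have hdiff : Differentiable ℂ (qf y t) := by
    apply Differentiable.cexp
    fun_prop
  have C : ∀ T : ℝ, (∫ x : ℝ in -T..T, qf y t (x + η * I)) =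
      (∫ x : ℝ in -T..T, qf y t x)
      + I • (∫ s : ℝ in (0:ℝ)..η, qf y t (T + s * I))
      - I • (∫ s : ℝ in (0:ℝ)..η, qf y t (-T + s * I)) := by
    intro T
    have := integral_boundary_rect_eq_zero_of_differentiableOn (qf y t) (-T) (T + η * I)
      hdiff.differentiableOn
    simp only [neg_im, ofReal_im, neg_zero, ofReal_zero, zero_mul, add_zero, neg_re,
      ofReal_re, add_re, mul_re, I_re, mul_zero, I_im, tsub_zero, add_im, mul_im,
      mul_one, zero_add, ofReal_neg] at this
    linear_combination (norm := module) -this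
  have lim2 : Tendsto (fun T : ℝ => ∫ x : ℝ in -T..T, qf y t x) atTop (𝓝 (∫ x : ℝ, qf y t x)) := by
    have : Integrable (fun x : ℝ => qf y t x) := by
      have := qf_integrable y t 0 ht
      simpa using this
    exact intervalIntegral_tendsto_integral this tendsto_neg_atTop_atBot tendsto_id
  have lim4 : Tendsto (fun T : ℝ => I • ∫ s : ℝ in (0:ℝ)..η, qf y t (T + s * I)) atTop (𝓝 0) := by
    rw [show (0:ℂ) = I • (0:ℂ) by simp]
    apply Tendsto.const_smul
    rw [tendsto_zero_iff_norm_tendsto_zero]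
    refine tendsto_of_tendsto_of_tendsto_of_le_of_le' tendsto_const_nhds
      (qf_vert_tendsto y t η ht) (Eventually.of_forall fun T => norm_nonneg _)
      (Eventually.of_forall fun T => qf_vert_int_le y t η ht.le T)
  have lim5 : Tendsto (fun T : ℝ => I • ∫ s : ℝ in (0:ℝ)..η, qf y t (-T + s * I)) atTop (𝓝 0) := by
    rw [show (0:ℂ) = I • (0:ℂ) by simp]
    apply Tendsto.const_smul
    rw [tendsto_zero_iff_norm_tendsto_zero]
    refine tendsto_of_tendsto_of_tendsto_of_le_of_le' tendsto_const_nhds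
      (qf_vert_tendsto y t η ht) (Eventually.of_forall fun T => norm_nonneg _)
      (Eventually.of_forall fun T => ?_)
    have h := qf_vert_int_le y t η ht.le (-T)
    rw [show ((-T:ℝ))^2 = T^2 by ring, show ((-T:ℝ))^4 = T^4 by ring] at h
    simpa using h
  have := (lim2.add lim4).sub lim5
  simp only [add_zero, sub_zero] at this
  refine Tendsto.congr (fun T => (C T).symm) this

def qc0 : ℝ := ∫ x : ℝ, Real.exp (-x ^ 4 / 2)

lemma qc0_integrable : Integrable (fun x : ℝ => Real.exp (-x ^ 4 / 2)) := by
  refine ((integrable_exp_neg_mul_sq (by norm_num : (0:ℝ) < 1/2)).const_mul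
    (Real.exp (1/2))).mono' (Real.continuous_exp.comp (by fun_prop)).aestronglyMeasurable ?_
  refine Eventually.of_forall fun x => ?_
  rw [Real.norm_eq_abs, abs_of_nonneg (Real.exp_nonneg _), ← Real.exp_add]
  apply Real.exp_le_exp.2
  nlinarith [sq_nonneg (x^2 - 1)]

lemma qc0_nonneg : 0 ≤ qc0 := integral_nonneg fun x => Real.exp_nonneg _

lemma quart_int_eq (t : ℝ) (ht : 0 < t) :
    ∫ x : ℝ, Real.exp (-(t / 2) * x ^ 4) = t ^ (-(1:ℝ)/4) * qc0 := by
  have h4 : (t ^ ((1:ℝ)/4)) ^ (4:ℕ) = t := by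
    rw [← Real.rpow_natCast (t ^ ((1:ℝ)/4)) 4, ← Real.rpow_mul ht.le]
    norm_num
  have key : ∀ x : ℝ, Real.exp (-(t / 2) * x ^ 4)
      = (fun u : ℝ => Real.exp (-u ^ 4 / 2)) (t ^ ((1:ℝ)/4) * x) := by
    intro x
    simp only
    congr 1
    rw [mul_pow, h4]
    ring
  simp_rw [key]
  rw [Measure.integral_comp_mul_left (fun u : ℝ => Real.exp (-u ^ 4 / 2)) (t ^ ((1:ℝ)/4)),
    smul_eq_mul]
  congr 1
  rw [abs_of_pos (by positivity), ← Real.rpow_neg ht.le]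
  norm_num

lemma qB_bound (y t : ℝ) (ht : 0 < t) (hy : y ≠ 0) :
    ‖∫ x : ℝ, qf y t x‖ ≤
      qc0 * t ^ (-(1:ℝ)/4) * Real.exp (-(1/3) * (|y| * (|y| / t) ^ ((1:ℝ)/3))) := by
  have hay : 0 < |y| := abs_pos.2 hy
  set B : ℝ := (|y| / t) ^ ((1:ℝ)/3) with hBdef
  have hB : 0 < B := by positivity
  have hB3 : B ^ (3:ℕ) = |y| / t := by
    rw [hBdef, ← Real.rpow_natCast ((|y|/t) ^ ((1:ℝ)/3)) 3, ← Real.rpow_mul (by positivity)]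
    norm_num
  set η : ℝ := -(1/17) * (y / |y|) * B with hηdef
  have hyy : y * y = |y| * |y| := (abs_mul_abs_self y).symm
  have hyη : y * η = -(1/17) * |y| * B := by
    rw [hηdef]
    field_simp
    linear_combination (-1) * hyy
  have hq : (y / |y|) ^ 4 = 1 := by
    rw [div_pow, show y ^ 4 = |y| ^ 4 by
      rw [← _root_.abs_pow]; exact (abs_of_nonneg (by positivity)).symm,
      div_self (by positivity)]
  have hη4 : η ^ 4 = (1/17)^4 * B^4 := by
    calc η ^ 4 = (1/17)^4 * (y / |y|)^4 * B^4 := by rw [hηdef]; ring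
      _ = (1/17)^4 * B^4 := by rw [hq]; ring
  have htη4 : t * η ^ 4 = (1/17)^4 * |y| * B := by
    rw [hη4, show (B:ℝ)^4 = B * (|y| / t) by rw [← hB3]; ring]
    field_simp
  rw [qf_contour y t η ht]
  have hquart : Integrable (fun x : ℝ => Real.exp (-(t/2) * x ^ 4)) := by
    refine ((integrable_exp_neg_mul_sq (by positivity : (0:ℝ) < t/2)).const_mul
      (Real.exp (t/2))).mono' (Real.continuous_exp.comp (by fun_prop)).aestronglyMeasurable ?_
    refine Eventually.of_forall fun x => ?_
    rw [Real.norm_eq_abs, abs_of_nonneg (Real.exp_nonneg _), ← Real.exp_add]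
    apply Real.exp_le_exp.2
    nlinarith [mul_nonneg ht.le (sq_nonneg (x^2 - 1)), sq_nonneg x, mul_nonneg ht.le (sq_nonneg x)]
  calc ‖∫ x : ℝ, qf y t (x + η * I)‖
      ≤ ∫ x : ℝ, Real.exp (2 * π * y * η + 17 * t * η ^ 4) * Real.exp (-(t/2) * x ^ 4) := by
        refine (MeasureTheory.norm_integral_le_integral_norm _).trans ?_
        apply integral_mono_of_nonneg (Eventually.of_forall fun x => norm_nonneg _)
          (hquart.const_mul _)
        refine Eventually.of_forall fun x => ?_
        simp only
        rw [qf_norm, ← Real.exp_add]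
        apply Real.exp_le_exp.2
        nlinarith [mul_nonneg ht.le (sq_nonneg (x^2 - 6*η^2))]
    _ = Real.exp (2 * π * y * η + 17 * t * η ^ 4) * (t ^ (-(1:ℝ)/4) * qc0) := by
        rw [MeasureTheory.integral_const_mul, quart_int_eq t ht]
    _ ≤ Real.exp (-(1/3) * (|y| * B)) * (t ^ (-(1:ℝ)/4) * qc0) := by
        apply mul_le_mul_of_nonneg_right _ (mul_nonneg (by positivity) qc0_nonneg)
        apply Real.exp_le_exp.2
        have hyB : 0 ≤ |y| * B := by positivity
        have hπ : π > 3 := Real.pi_gt_three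
        rw [show 2 * π * y * η = 2 * π * (y * η) by ring, hyη,
          show (17:ℝ) * t * η ^ 4 = 17 * (t * η ^ 4) by ring, htη4]
        nlinarith [mul_nonneg hyB (sub_nonneg.2 hπ.le), hyB]
    _ = qc0 * t ^ (-(1:ℝ)/4) * Real.exp (-(1/3) * (|y| * B)) := by ring

lemma qA_norm (x t : ℝ) (ht : 0 < t) :
    ‖∫ u : ℝ, Complex.exp (-2 * π * x * u * I - t * u ^ 2)‖
      = (π / t) ^ ((1:ℝ)/2) * Real.exp (-(π ^ 2 * x ^ 2 / t)) := by
  have hb : (0:ℝ) < ((t:ℂ)).re := by simpa using ht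
  have key := fourierIntegral_gaussian hb ((-2 * π * x : ℝ) : ℂ)
  have hintg : ∀ u : ℝ, Complex.exp (-2 * π * x * u * I - t * u ^ 2)
      = Complex.exp (I * ((-2 * π * x : ℝ) : ℂ) * u) * Complex.exp (-(t:ℂ) * u ^ 2) := by
    intro u
    rw [← Complex.exp_add]
    congr 1
    push_cast
    ring
  simp_rw [hintg]
  rw [key, norm_mul]
  congr 1
  · rw [show (↑π / (t:ℂ)) = (((π / t : ℝ)) : ℂ) by push_cast; ring,
      Complex.norm_cpow_eq_rpow_re_of_pos (by positivity)]
    norm_num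
  · rw [show -((-2 * π * x : ℝ) : ℂ) ^ 2 / (4 * (t:ℂ)) = ((-(π ^ 2 * x ^ 2 / t) : ℝ) : ℂ) by
      push_cast; field_simp; ring]
    rw [Complex.norm_exp]
    simp [← Complex.ofReal_pow]

lemma Hker_eq (x y t : ℝ) :
    Hker x y t = (∫ u : ℝ, Complex.exp (-2 * π * x * u * I - t * u ^ 2)) * (∫ v : ℝ, qf y t v) := by
  rw [Hker, ← MeasureTheory.integral_prod_mul]
  rw [show ((volume : Measure ℝ).prod (volume : Measure ℝ)) = (volume : Measure (ℝ × ℝ)) from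
    (MeasureTheory.Measure.volume_eq_prod _ _).symm]
  congr 1
  funext ξ
  rw [qf, ← Complex.exp_add, ← Complex.exp_add]
  congr 1
  push_cast
  ring

lemma Hker_norm_le (x y t : ℝ) (ht : 0 < t) (hy : y ≠ 0) :
    ‖Hker x y t‖ ≤ ((π / t) ^ ((1:ℝ)/2) * Real.exp (-(π ^ 2 * x ^ 2 / t)))
      * (qc0 * t ^ (-(1:ℝ)/4) * Real.exp (-(1/3) * (|y| * (|y| / t) ^ ((1:ℝ)/3)))) := by
  rw [Hker_eq, norm_mul, qA_norm x t ht]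
  exact mul_le_mul_of_nonneg_left (qB_bound y t ht hy) (by positivity)

lemma xlem (t x : ℝ) (ht : 0 < t) : |x| ≤ t / 3 + π ^ 2 * x ^ 2 / t := by
  rcases le_or_gt (3 * |x|) t with h | h
  · have : (0:ℝ) ≤ π ^ 2 * x ^ 2 / t := by positivity
    linarith
  · by_cases hx : x = 0
    · simp [hx]; positivity
    have hax : 0 < |x| := abs_pos.2 hx
    have h1 : π ^ 2 * x ^ 2 / (3 * |x|) ≤ π ^ 2 * x ^ 2 / t :=
      div_le_div_of_nonneg_left (by positivity) ht h.le
    have h2 : π ^ 2 * x ^ 2 / (3 * |x|) = π ^ 2 * |x| / 3 := by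
      rw [show x ^ 2 = |x| ^ 2 from (sq_abs x).symm]
      field_simp
    have hπ : π > 3 := Real.pi_gt_three
    have hπ2 : π ^ 2 > 9 := by nlinarith
    nlinarith [mul_pos (show (0:ℝ) < π ^ 2 - 9 by linarith) hax]
lemma ylem (t y : ℝ) (ht : 0 < t) : |y| ≤ t + |y| * (|y| / t) ^ ((1:ℝ)/3) := by
  rcases le_or_gt |y| t with h | h
  · have : (0:ℝ) ≤ |y| * (|y| / t) ^ ((1:ℝ)/3) := by positivity
    linarith
  · have h1 : (1:ℝ) ≤ (|y| / t) ^ ((1:ℝ)/3) :=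
      Real.one_le_rpow ((one_le_div ht).2 h.le) (by norm_num)
    nlinarith [abs_nonneg y]

def qc3 : ℝ := ∫ t in Set.Ioi (0:ℝ), Real.exp (-t / 3) * t ^ (-(3:ℝ)/4)

lemma qc3_integrable :
    IntegrableOn (fun t : ℝ => Real.exp (-t / 3) * t ^ (-(3:ℝ)/4)) (Set.Ioi 0) := by
  have h := Real.GammaIntegral_convergent (by norm_num : (0:ℝ) < 1/4)
  have h2 := (integrableOn_Ioi_comp_mul_left_iff
    (fun x : ℝ => Real.exp (-x) * x ^ ((1/4:ℝ) - 1)) 0 (by norm_num : (0:ℝ) < 1/3)).2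
    (by simpa using h)
  have h3 := h2.mul_const ((3:ℝ) ^ (-(3:ℝ)/4))
  refine MeasureTheory.IntegrableOn.congr_fun h3 (fun t htt => ?_) measurableSet_Ioi
  have h3a : (3:ℝ) ^ ((3:ℝ)/4) * (3:ℝ) ^ (-(3:ℝ)/4) = 1 := by
    rw [← Real.rpow_add (by norm_num)]; norm_num
  have h2e : ((1:ℝ)/3 * t) ^ ((1/4:ℝ) - 1) = 3 ^ ((3:ℝ)/4) * t ^ (-(3:ℝ)/4) := by
    rw [Real.mul_rpow (by norm_num) (le_of_lt htt)]
    congr 1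
    · rw [show ((1:ℝ)/3) = (3:ℝ) ^ (-1:ℝ) by rw [Real.rpow_neg_one]; norm_num,
        ← Real.rpow_mul (by norm_num : (0:ℝ) ≤ 3)]
      norm_num
    · norm_num
  rw [show -((1:ℝ)/3 * t) = -t/3 by ring, h2e]
  linear_combination (Real.exp (-t/3) * t ^ (-(3:ℝ)/4)) * h3a

lemma qc3_nonneg : 0 ≤ qc3 :=
  setIntegral_nonneg measurableSet_Ioi fun t ht =>
    mul_nonneg (Real.exp_nonneg _) (Real.rpow_nonneg (le_of_lt ht) _)

lemma final_y (s : ℝ) (hs : 0 < s) :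
    Real.exp (-(s/3)) ≤ 6 * s ^ (-(1:ℝ)/3) * Real.exp (-(1/6) * s ^ ((2:ℝ)/3)) := by
  have key : s ^ ((1:ℝ)/3) * Real.exp ((1/6) * s ^ ((2:ℝ)/3) - s/3) ≤ 6 := by
    rcases le_or_gt s 1 with h | h
    · have h1 : s ^ ((1:ℝ)/3) ≤ 1 := Real.rpow_le_one hs.le h (by norm_num)
      have h2 : s ^ ((2:ℝ)/3) ≤ 1 := Real.rpow_le_one hs.le h (by norm_num)
      have h3 : Real.exp ((1/6) * s ^ ((2:ℝ)/3) - s/3) ≤ Real.exp 1 :=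
        Real.exp_le_exp.2 (by nlinarith)
      have h4 : Real.exp 1 ≤ 3 := by
        have := Real.exp_one_lt_d9
        linarith
      have h5 : (0:ℝ) < Real.exp ((1/6) * s ^ ((2:ℝ)/3) - s/3) := Real.exp_pos _
      nlinarith
    · have h1 : s ^ ((1:ℝ)/3) ≤ s := by
        calc s ^ ((1:ℝ)/3) ≤ s ^ (1:ℝ) :=
              Real.rpow_le_rpow_of_exponent_le h.le (by norm_num)
          _ = s := Real.rpow_one s
      have h2 : s ^ ((2:ℝ)/3) ≤ s := by
        calc s ^ ((2:ℝ)/3) ≤ s ^ (1:ℝ) :=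
              Real.rpow_le_rpow_of_exponent_le h.le (by norm_num)
          _ = s := Real.rpow_one s
      have h3 : Real.exp ((1/6) * s ^ ((2:ℝ)/3) - s/3) ≤ Real.exp (-(s/6)) :=
        Real.exp_le_exp.2 (by linarith)
      have h4 : s/6 ≤ Real.exp (s/6) := by linarith [Real.add_one_le_exp (s/6)]
      calc s ^ ((1:ℝ)/3) * Real.exp ((1/6) * s ^ ((2:ℝ)/3) - s/3)
          ≤ s * Real.exp (-(s/6)) := by
            apply mul_le_mul h1 h3 (Real.exp_nonneg _) (by linarith)
        _ ≤ 6 := by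
            rw [Real.exp_neg, mul_inv_le_iff₀ (Real.exp_pos _)]
            linarith
  have cancel : s ^ (-(1:ℝ)/3) * s ^ ((1:ℝ)/3) = 1 := by
    rw [← Real.rpow_add hs]
    norm_num
  calc Real.exp (-(s/3))
      = (s ^ (-(1:ℝ)/3) * Real.exp (-(1/6) * s ^ ((2:ℝ)/3)))
        * (s ^ ((1:ℝ)/3) * Real.exp ((1/6) * s ^ ((2:ℝ)/3) - s/3)) := by
        rw [mul_mul_mul_comm, cancel, one_mul, ← Real.exp_add]
        congr 1
        ring
    _ ≤ (s ^ (-(1:ℝ)/3) * Real.exp (-(1/6) * s ^ ((2:ℝ)/3))) * 6 := by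
        apply mul_le_mul_of_nonneg_left key (by positivity)
    _ = 6 * s ^ (-(1:ℝ)/3) * Real.exp (-(1/6) * s ^ ((2:ℝ)/3)) := by ring

lemma Kker_bound (x y : ℝ) (hy : y ≠ 0) :
    ‖Kker x y‖ ≤ (π ^ ((1:ℝ)/2) * qc0 * qc3)
      * (Real.exp (-|x|) * Real.exp (-(|y|/3))) := by
  set cX : ℝ := π ^ ((1:ℝ)/2) * qc0 * (Real.exp (-|x|) * Real.exp (-(|y|/3))) with hcX
  have hq0 := qc0_nonneg
  have hcXnn : 0 ≤ cX := by
    apply mul_nonneg (mul_nonneg (Real.rpow_nonneg Real.pi_pos.le _) hq0)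
    positivity
  have key : ∀ t ∈ Set.Ioi (0:ℝ), ‖Real.exp (-t) • Hker x y t‖
      ≤ cX * (Real.exp (-t/3) * t ^ (-(3:ℝ)/4)) := by
    intro t ht
    rw [Set.mem_Ioi] at ht
    rw [norm_smul, Real.norm_eq_abs, abs_of_nonneg (Real.exp_nonneg _)]
    have step := mul_le_mul_of_nonneg_left (Hker_norm_le x y t ht hy) (Real.exp_nonneg (-t))
    refine step.trans ?_
    have e0 : Real.exp (-t) = Real.exp (-t/3) * Real.exp (-t/3) * Real.exp (-t/3) := by
      rw [← Real.exp_add, ← Real.exp_add]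
      congr 1
      ring
    have er : (π / t) ^ ((1:ℝ)/2) = π ^ ((1:ℝ)/2) * t ^ (-((1:ℝ)/2)) := by
      rw [Real.div_rpow Real.pi_pos.le ht.le, div_eq_mul_inv, ← Real.rpow_neg ht.le]
    have et : t ^ (-((1:ℝ)/2)) * t ^ (-(1:ℝ)/4) = t ^ (-(3:ℝ)/4) := by
      rw [← Real.rpow_add ht]
      norm_num
    have hA : Real.exp (-t/3) * Real.exp (-(π ^ 2 * x ^ 2 / t)) ≤ Real.exp (-|x|) := by
      rw [← Real.exp_add]
      exact Real.exp_le_exp.2 (by linarith [xlem t x ht])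
    have hB : Real.exp (-t/3) * Real.exp (-(1/3) * (|y| * (|y| / t) ^ ((1:ℝ)/3)))
        ≤ Real.exp (-(|y|/3)) := by
      rw [← Real.exp_add]
      exact Real.exp_le_exp.2 (by linarith [ylem t y ht])
    calc Real.exp (-t) * ((π / t) ^ ((1:ℝ)/2) * Real.exp (-(π ^ 2 * x ^ 2 / t))
          * (qc0 * t ^ (-(1:ℝ)/4) * Real.exp (-(1/3) * (|y| * (|y| / t) ^ ((1:ℝ)/3)))))
        = (π ^ ((1:ℝ)/2) * qc0) *
            ((Real.exp (-t/3) * Real.exp (-(π ^ 2 * x ^ 2 / t)))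
            * (Real.exp (-t/3) * Real.exp (-(1/3) * (|y| * (|y| / t) ^ ((1:ℝ)/3))))
            * (Real.exp (-t/3) * (t ^ (-((1:ℝ)/2)) * t ^ (-(1:ℝ)/4)))) := by
          rw [e0, er]
          ring
      _ ≤ (π ^ ((1:ℝ)/2) * qc0) *
            (Real.exp (-|x|) * Real.exp (-(|y|/3))
            * (Real.exp (-t/3) * (t ^ (-((1:ℝ)/2)) * t ^ (-(1:ℝ)/4)))) := by
          apply mul_le_mul_of_nonneg_left _
            (mul_nonneg (Real.rpow_nonneg Real.pi_pos.le _) hq0)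
          apply mul_le_mul_of_nonneg_right (mul_le_mul hA hB (by positivity)
            (Real.exp_nonneg _)) (by positivity)
      _ = cX * (Real.exp (-t/3) * t ^ (-(3:ℝ)/4)) := by
          rw [← et, hcX]
          ring
  calc ‖Kker x y‖ ≤ ∫ t in Set.Ioi (0:ℝ), ‖Real.exp (-t) • Hker x y t‖ :=
        MeasureTheory.norm_integral_le_integral_norm _
    _ ≤ ∫ t in Set.Ioi (0:ℝ), cX * (Real.exp (-t/3) * t ^ (-(3:ℝ)/4)) := by
        apply integral_mono_of_nonneg (Eventually.of_forall fun t => norm_nonneg _)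
          (qc3_integrable.const_mul cX)
        exact (ae_restrict_iff' measurableSet_Ioi).2 (Eventually.of_forall key)
    _ = cX * qc3 := by rw [MeasureTheory.integral_const_mul]; rfl
    _ = (π ^ ((1:ℝ)/2) * qc0 * qc3) * (Real.exp (-|x|) * Real.exp (-(|y|/3))) := by
        rw [hcX]
        ring

theorem stmt_17' :
    ∃ C₁ > (0 : ℝ), ∃ C₂ > (0 : ℝ), ∀ x y : ℝ, y ≠ 0 →
      ‖Kker x y‖ ≤ C₁ * |y| ^ (-(1 : ℝ) / 3) * Real.exp (-C₂ * (|x| + |y| ^ ((2 : ℝ) / 3))) := by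
  have hK0 : 0 ≤ π ^ ((1:ℝ)/2) * qc0 * qc3 :=
    mul_nonneg (mul_nonneg (Real.rpow_nonneg Real.pi_pos.le _) qc0_nonneg) qc3_nonneg
  set K0 : ℝ := π ^ ((1:ℝ)/2) * qc0 * qc3 with hK0def
  refine ⟨6 * K0 + 1, by linarith, 1/6, by norm_num, fun x y hy => ?_⟩
  have hs : 0 < |y| := abs_pos.2 hy
  calc ‖Kker x y‖ ≤ K0 * (Real.exp (-|x|) * Real.exp (-(|y|/3))) := Kker_bound x y hy
    _ ≤ K0 * (Real.exp (-(1/6) * |x|)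
        * (6 * |y| ^ (-(1:ℝ)/3) * Real.exp (-(1/6) * |y| ^ ((2:ℝ)/3)))) := by
        apply mul_le_mul_of_nonneg_left _ hK0
        apply mul_le_mul (Real.exp_le_exp.2 (by have := abs_nonneg x; linarith))
          (final_y |y| hs) (Real.exp_nonneg _) (Real.exp_nonneg _)
    _ = (6 * K0) * |y| ^ (-(1:ℝ)/3)
        * (Real.exp (-(1/6) * |x|) * Real.exp (-(1/6) * |y| ^ ((2:ℝ)/3))) := by ring
    _ = (6 * K0) * |y| ^ (-(1:ℝ)/3) * Real.exp (-(1/6) * (|x| + |y| ^ ((2:ℝ)/3))) := by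
        rw [← Real.exp_add]
        congr 1
        ring
    _ ≤ (6 * K0 + 1) * |y| ^ (-(1:ℝ)/3) * Real.exp (-(1/6) * (|x| + |y| ^ ((2:ℝ)/3))) := by
        apply mul_le_mul_of_nonneg_right _ (Real.exp_nonneg _)
        apply mul_le_mul_of_nonneg_right (by linarith) (Real.rpow_nonneg hs.le _)

end Aux

/-- Anisotropic pointwise decay of the fundamental solution. -/
theorem stmt_17 :
    ∃ C₁ > (0 : ℝ), ∃ C₂ > (0 : ℝ), ∀ x y : ℝ, y ≠ 0 →
      ‖Kker x y‖ ≤ C₁ * |y| ^ (-(1 : ℝ) / 3) * Real.exp (-C₂ * (|x| + |y| ^ ((2 : ℝ) / 3))) := by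
  exact stmt_17'
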